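/- Let M be any countable structure in a countable relational language L and let λ be a countable limit ordinal. Then: (1) the sets {N ∈ Mod(L) : N ≤_λ M} and {N ∈ Mod(L) : N ≥_λ M} are equal and are 𝚷⁰_λ; (2) for α = λ+1, the set {N ∈ Mod(L) : N ≥_α M} is 𝚷⁰_{α+1}; and (3) for α = λ+1, the set {N ∈ Mod(L) : N ≤_α M} is 𝚷⁰_{α+1}. -/

import Mathlib

open FirstOrder Language

namespace BFPaper

noncomputable section

/-! ## Countability of formulas in a countable relational language -/

instance formulaCountable (L : FirstOrder.Language.{0,0}) [L.IsRelational]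
    [∀ n, Countable (L.Relations n)] (α : Type) [Countable α] :
    Countable (L.Formula α) := by
  have h1 : Countable (Σ n, L.BoundedFormula α n) :=
    Function.Injective.countable BoundedFormula.listEncode_sigma_injective
  exact Function.Injective.countable
    (f := fun φ : L.Formula α => (⟨0, φ⟩ : Σ n, L.BoundedFormula α n))
    (fun a b h => by simpa using h)

/-- A fixed enumeration of the quantifier-free first-order formulas in the
variables `x_0, …, x_{n-1}`. -/
noncomputable def qfEnum (L : FirstOrder.Language.{0,0}) [L.IsRelational]
    [∀ n, Countable (L.Relations n)] (n : ℕ) : ℕ → L.Formula (Fin n) := fun k =>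
  haveI : Nonempty {φ : L.Formula (Fin n) // φ.IsQF} :=
    ⟨⟨⊥, BoundedFormula.isQF_bot⟩⟩
  (Classical.choose (exists_surjective_nat {φ : L.Formula (Fin n) // φ.IsQF}) k).1

/-! ## The standard asymmetric back-and-forth relations -/

/-- `bfLeq L α M N a b` is the standard asymmetric back-and-forth relation
`(M, ā) ≤_α (N, b̄)`. -/
noncomputable def bfLeq (L : FirstOrder.Language.{0,0}) [L.IsRelational]
    [∀ n, Countable (L.Relations n)] (α : Ordinal.{0}) (M N : Type)
    [L.Structure M] [L.Structure N] {n : ℕ} (a : Fin n → M) (b : Fin n → N) : Prop :=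
  if α = 0 then
    ∀ k < n, ((qfEnum L n k).Realize a ↔ (qfEnum L n k).Realize b)
  else
    ∀ β, ∀ _ : β < α, ∀ (m : ℕ) (d : Fin m → N), ∃ c : Fin m → M,
      bfLeq L β N M (Fin.append b d) (Fin.append a c)
termination_by α
decreasing_by assumption

/-- `M ≤_α N` for whole structures (empty tuples). -/
noncomputable def structLeq (L : FirstOrder.Language.{0,0}) [L.IsRelational]
    [∀ n, Countable (L.Relations n)] (α : Ordinal.{0}) (M N : Type)
    [L.Structure M] [L.Structure N] : Prop :=
  bfLeq L α M N Fin.elim0 Fin.elim0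

/-! ## The space of countable `L`-structures -/

/-- The Polish space `Mod(L)` of `L`-structures with universe `ℕ` (for a relational
language), presented as a product of discrete spaces. -/
abbrev ModSpace (L : FirstOrder.Language.{0,0}) : Type :=
  ∀ (n : ℕ), L.Relations n → (Fin n → ℕ) → Bool

/-- The underlying set (`ℕ`) of the structure coded by a point of `Mod(L)`. -/
def ModCarrier {L : FirstOrder.Language.{0,0}} (_x : ModSpace L) : Type := ℕ

instance {L : FirstOrder.Language.{0,0}} (x : ModSpace L) : Countable (ModCarrier x) :=
  inferInstanceAs (Countable ℕ)

noncomputable instance modCarrierStructure {L : FirstOrder.Language.{0,0}} [L.IsRelational]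
    (x : ModSpace L) : L.Structure (ModCarrier x) where
  funMap := fun {_} f => isEmptyElim f
  RelMap := fun {n} R v => x n R v = true

/-! ## The boldface Borel hierarchy and Wadge reducibility -/

/-- `A` is (boldface) `Σ⁰_α`: `Σ⁰₁` sets are the open sets, and for `α > 1` a `Σ⁰_α` set
is a countable union of sets each of which is `Π⁰_β` for some `1 ≤ β < α`. -/
def SigmaB (α : Ordinal.{0}) {X : Type} [TopologicalSpace X] (A : Set X) : Prop :=
  if α ≤ 1 then IsOpen A
  else ∃ f : ℕ → Set X, A = (⋃ i, f i) ∧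
    ∀ i, ∃ β, 1 ≤ β ∧ ∃ _ : β < α, SigmaB β (f i)ᶜ
termination_by α
decreasing_by assumption

/-- `A` is (boldface) `Π⁰_α`, i.e. the complement of `A` is `Σ⁰_α`. -/
def PiB (α : Ordinal.{0}) {X : Type} [TopologicalSpace X] (A : Set X) : Prop :=
  SigmaB α Aᶜ

/-- `A` is `Π⁰_α`-hard: every `Π⁰_α` subset of a zero-dimensional Polish space
continuously (Wadge) reduces to `A`. -/
def PiHard (α : Ordinal.{0}) {X : Type} [TopologicalSpace X] (A : Set X) : Prop :=
  ∀ (Y : Type) [TopologicalSpace Y] [PolishSpace Y] [TotallyDisconnectedSpace Y]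
    (B : Set Y), PiB α B → ∃ g : Y → X, Continuous g ∧ ∀ y, y ∈ B ↔ g y ∈ A

/-- `A` is `Π⁰_α`-complete. -/
def PiComplete (α : Ordinal.{0}) {X : Type} [TopologicalSpace X] (A : Set X) : Prop :=
  PiB α A ∧ PiHard α A

/-! ## Infinitary formulas of `L_{ω₁ω}` -/

/-- Formulas of `L_{ω₁ω}` (with countable conjunctions and disjunctions), with free
variables indexed by `ℕ`. -/
inductive LForm (L : FirstOrder.Language.{0,0}) : Type
  | rel (n : ℕ) (R : L.Relations n) (ts : Fin n → ℕ) : LForm L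
  | equ (i j : ℕ) : LForm L
  | tru : LForm L
  | fls : LForm L
  | not (φ : LForm L) : LForm L
  | conj (f : ℕ → LForm L) : LForm L
  | disj (f : ℕ → LForm L) : LForm L
  | all (k : ℕ) (φ : LForm L) : LForm L
  | ex (k : ℕ) (φ : LForm L) : LForm L

/-- Satisfaction of an `L_{ω₁ω}` formula in a structure `M` under a variable
assignment `v : ℕ → M`. -/
def Sat {L : FirstOrder.Language.{0,0}} (M : Type) [L.Structure M] : LForm L → (ℕ → M) → Prop
  | .rel _ R ts, v => Structure.RelMap R (fun i => v (ts i))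
  | .equ i j, v => v i = v j
  | .tru, _ => True
  | .fls, _ => False
  | .not φ, v => ¬ Sat M φ v
  | .conj f, v => ∀ i, Sat M (f i) v
  | .disj f, v => ∃ i, Sat M (f i) v
  | .all k φ, v => ∀ m : M, Sat M φ (Function.update v k m)
  | .ex k φ, v => ∃ m : M, Sat M φ (Function.update v k m)

/-- The free variables of an `L_{ω₁ω}` formula. -/
def fv {L : FirstOrder.Language.{0,0}} : LForm L → Set ℕ
  | .rel _ _ ts => Set.range ts
  | .equ i j => {i, j}
  | .tru => ∅
  | .fls => ∅
  | .not φ => fv φ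
  | .conj f => ⋃ i, fv (f i)
  | .disj f => ⋃ i, fv (f i)
  | .all k φ => fv φ \ {k}
  | .ex k φ => fv φ \ {k}

/-- Finitary quantifier-free `L_{ω₁ω}` formulas. -/
inductive IsQFinf {L : FirstOrder.Language.{0,0}} : LForm L → Prop
  | rel (n R ts) : IsQFinf (.rel n R ts)
  | equ (i j) : IsQFinf (.equ i j)
  | tru : IsQFinf .tru
  | fls : IsQFinf .fls
  | not {φ} : IsQFinf φ → IsQFinf (.not φ)
  | conj {f} : (Set.range f).Finite → (∀ i, IsQFinf (f i)) → IsQFinf (.conj f)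
  | disj {f} : (Set.range f).Finite → (∀ i, IsQFinf (f i)) → IsQFinf (.disj f)

/-- `ExBlockOf φ ψ` : `φ` is `∃ x̄ ψ` for a (possibly empty) finite block of
existential quantifiers. -/
inductive ExBlockOf {L : FirstOrder.Language.{0,0}} : LForm L → LForm L → Prop
  | refl (φ) : ExBlockOf φ φ
  | ex {φ ψ} (k) : ExBlockOf φ ψ → ExBlockOf (.ex k φ) ψ

/-- `AllBlockOf φ ψ` : `φ` is `∀ x̄ ψ` for a (possibly empty) finite block of
universal quantifiers. -/
inductive AllBlockOf {L : FirstOrder.Language.{0,0}} : LForm L → LForm L → Prop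
  | refl (φ) : AllBlockOf φ φ
  | all {φ ψ} (k) : AllBlockOf φ ψ → AllBlockOf (.all k φ) ψ

/-- `IsSP α true φ` says `φ` is `Σ_α`; `IsSP α false φ` says `φ` is `Π_α`.
`Σ₀ = Π₀` are the finitary quantifier-free formulas; for `α ≥ 1`, a `Σ_α` formula is a
countable disjunction of formulas `∃x̄ᵢ ψᵢ` with each `ψᵢ` in `Π_{βᵢ}` for some `βᵢ < α`,
and dually for `Π_α`. -/
def IsSP {L : FirstOrder.Language.{0,0}} (α : Ordinal.{0}) (isSigma : Bool) (φ : LForm L) : Prop :=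
  if α = 0 then IsQFinf φ
  else if isSigma then
    ∃ f : ℕ → LForm L, φ = .disj f ∧
      ∀ i, ∃ ψ β, ∃ _ : β < α, ExBlockOf (f i) ψ ∧ IsSP β false ψ
  else
    ∃ f : ℕ → LForm L, φ = .conj f ∧
      ∀ i, ∃ ψ β, ∃ _ : β < α, AllBlockOf (f i) ψ ∧ IsSP β true ψ
termination_by α
decreasing_by all_goals assumption

/-- `φ` is a `Σ_α` formula of `L_{ω₁ω}`. -/
def IsSigmaF {L : FirstOrder.Language.{0,0}} (α : Ordinal.{0}) (φ : LForm L) : Prop := IsSP α true φ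

/-- `φ` is a `Π_α` formula of `L_{ω₁ω}`. -/
def IsPiF {L : FirstOrder.Language.{0,0}} (α : Ordinal.{0}) (φ : LForm L) : Prop := IsSP α false φ

/-! ## The back-and-forth classes `𝔈_α`, `𝔄_α`, `𝔈̄_α`, `𝔄̄_α` -/

/-- Closure of a class of formulas under existential quantification and countable
disjunction. -/
inductive CloExDisj {L : FirstOrder.Language.{0,0}} (base : LForm L → Prop) : LForm L → Prop
  | base {φ} : base φ → CloExDisj base φ
  | ex {φ} (k) : CloExDisj base φ → CloExDisj base (.ex k φ)
  | disj {f} : (∀ i, CloExDisj base (f i)) → CloExDisj base (.disj f)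

/-- Closure of a class of formulas under universal quantification and countable
conjunction. -/
inductive CloAllConj {L : FirstOrder.Language.{0,0}} (base : LForm L → Prop) : LForm L → Prop
  | base {φ} : base φ → CloAllConj base φ
  | all {φ} (k) : CloAllConj base φ → CloAllConj base (.all k φ)
  | conj {f} : (∀ i, CloAllConj base (f i)) → CloAllConj base (.conj f)

/-- Closure of a class of formulas under countable conjunctions and disjunctions. -/
inductive CloConjDisj {L : FirstOrder.Language.{0,0}} (base : LForm L → Prop) : LForm L → Prop
  | base {φ} : base φ → CloConjDisj base φ
  | conj {f} : (∀ i, CloConjDisj base (f i)) → CloConjDisj base (.conj f)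
  | disj {f} : (∀ i, CloConjDisj base (f i)) → CloConjDisj base (.disj f)

/-- `IsEA α true φ` says `φ ∈ 𝔈_α` and `IsEA α false φ` says `φ ∈ 𝔄_α`:
`𝔈₁ = Σ₁`, `𝔄₁ = Π₁`; for `α > 1`, `𝔈_α` is the closure of `⋃_{1 ≤ β < α} 𝔄̄_β` under `∃`
and countable disjunction, where `𝔄̄_β` is the closure of `𝔄_β` under countable
conjunctions and disjunctions; dually for `𝔄_α`. -/
def IsEA {L : FirstOrder.Language.{0,0}} (α : Ordinal.{0}) (isE : Bool) (φ : LForm L) : Prop :=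
  if α ≤ 1 then (if isE then IsSP 1 true φ else IsSP 1 false φ)
  else if isE then
    CloExDisj (fun ψ => ∃ β, 1 ≤ β ∧ ∃ _ : β < α,
      CloConjDisj (fun χ => IsEA β false χ) ψ) φ
  else
    CloAllConj (fun ψ => ∃ β, 1 ≤ β ∧ ∃ _ : β < α,
      CloConjDisj (fun χ => IsEA β true χ) ψ) φ
termination_by α
decreasing_by all_goals assumption

/-- `φ ∈ 𝔈_α`. -/
def IsE {L : FirstOrder.Language.{0,0}} (α : Ordinal.{0}) (φ : LForm L) : Prop := IsEA α true φ

/-- `φ ∈ 𝔄_α`. -/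
def IsA {L : FirstOrder.Language.{0,0}} (α : Ordinal.{0}) (φ : LForm L) : Prop := IsEA α false φ

/-- `φ ∈ 𝔈̄_α`, the closure of `𝔈_α` under countable conjunctions and disjunctions. -/
def IsEbar {L : FirstOrder.Language.{0,0}} (α : Ordinal.{0}) (φ : LForm L) : Prop :=
  CloConjDisj (IsE α) φ

/-- `φ ∈ 𝔄̄_α`, the closure of `𝔄_α` under countable conjunctions and disjunctions. -/
def IsAbar {L : FirstOrder.Language.{0,0}} (α : Ordinal.{0}) (φ : LForm L) : Prop :=
  CloConjDisj (IsA α) φ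

/-- `φ` is a `∀𝔈_α` formula: a countable conjunction of universally quantified `𝔈_α`
formulas. -/
def IsForallE {L : FirstOrder.Language.{0,0}} (α : Ordinal.{0}) (φ : LForm L) : Prop :=
  ∃ f : ℕ → LForm L, φ = .conj f ∧ ∀ i, ∃ ψ, AllBlockOf (f i) ψ ∧ IsE α ψ

/-- A sentence is a formula with no free variables. -/
def IsSentence {L : FirstOrder.Language.{0,0}} (φ : LForm L) : Prop := fv φ = ∅

/-- Satisfaction of a formula (with free variables among `x_0, …, x_{n-1}`) by a tuple. -/
def SatTup {L : FirstOrder.Language.{0,0}} (M : Type) [L.Structure M] {n : ℕ}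
    (c : Fin n → M) (φ : LForm L) : Prop :=
  ∀ v : ℕ → M, (∀ k : Fin n, v k = c k) → Sat M φ v

end

section Plumbing
variable {X : Type} [TopologicalSpace X] {γ : Ordinal.{0}} {A : Set X}

theorem sigmaB_of_isClopen (h : IsClopen A) : SigmaB γ A := by
  rcases le_or_gt γ 1 with hγ | hγ
  · rw [SigmaB, if_pos hγ]; exact h.isOpen
  · rw [SigmaB, if_neg (not_le.2 hγ)]
    refine ⟨fun _ => A, (Set.iUnion_const A).symm, fun i => ⟨1, le_refl 1, hγ, ?_⟩⟩
    rw [SigmaB, if_pos (le_refl 1)]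
    exact h.compl.isOpen

theorem piB_of_isClopen (h : IsClopen A) : PiB γ A := sigmaB_of_isClopen h.compl

theorem sigmaB_iUnion {ι : Type*} [Countable ι] (f : ι → Set X) (hγ : 1 < γ)
    (h : ∀ i, ∃ β, 1 ≤ β ∧ β < γ ∧ SigmaB β (f i)ᶜ) : SigmaB γ (⋃ i, f i) := by
  rcases isEmpty_or_nonempty ι with hι | hι
  · rw [Set.iUnion_of_empty]; exact sigmaB_of_isClopen isClopen_empty
  · obtain ⟨g, hg⟩ := exists_surjective_nat ι
    rw [SigmaB, if_neg (not_le.2 hγ)]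
    refine ⟨fun k => f (g k), ?_, fun k => ?_⟩
    · rw [hg.iUnion_comp fun i => f i]
    · obtain ⟨β, h1, h2, h3⟩ := h (g k)
      exact ⟨β, h1, h2, h3⟩

theorem piB_iInter {ι : Type*} [Countable ι] (f : ι → Set X) (hγ : 1 < γ)
    (h : ∀ i, ∃ β, 1 ≤ β ∧ β < γ ∧ SigmaB β (f i)) : PiB γ (⋂ i, f i) := by
  unfold PiB
  rw [Set.compl_iInter]
  exact sigmaB_iUnion _ hγ fun i => by simpa using h i

end Plumbing
set_option linter.unusedSectionVars false
section Clopen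
variable (L : FirstOrder.Language.{0,0}) [L.IsRelational] [∀ n, Countable (L.Relations n)]

theorem term_eq_var {γ : Type*} (t : L.Term γ) : ∃ i, t = Term.var i := by
  cases t with
  | var i => exact ⟨i, rfl⟩
  | func f _ => exact isEmptyElim f

theorem isClopen_realize {n l : ℕ} (φ : L.BoundedFormula (Fin n) l) (hφ : φ.IsQF)
    (b : Fin n → ℕ) (xs : Fin l → ℕ) :
    IsClopen {x : ModSpace L | BoundedFormula.Realize (M := ModCarrier x) φ b xs} := by
  induction hφ with
  | falsum =>
    have : {x : ModSpace L | BoundedFormula.Realize (M := ModCarrier x) (BoundedFormula.falsum : L.BoundedFormula (Fin n) l) b xs} = ∅ := by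
      ext x; simp [BoundedFormula.Realize]
    rw [this]; exact isClopen_empty
  | of_isAtomic ha =>
    cases ha with
    | equal t₁ t₂ =>
      obtain ⟨i, rfl⟩ := term_eq_var L t₁
      obtain ⟨j, rfl⟩ := term_eq_var L t₂
      have key : {x : ModSpace L |
          BoundedFormula.Realize (M := ModCarrier x) ((Term.var i : L.Term (Fin n ⊕ Fin l)).bdEqual (Term.var j)) b xs}
          = {_x : ModSpace L | Sum.elim b xs i = Sum.elim b xs j} := by
        ext x
        simp only [Set.mem_setOf_eq, BoundedFormula.realize_bdEqual, Term.realize_var]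
        exact Iff.rfl
      rw [key]
      rcases Classical.em (Sum.elim b xs i = Sum.elim b xs j) with h | h
      · simp only [h]; exact isClopen_univ
      · simp only [h]; exact isClopen_empty
    | @rel l' R ts =>
      choose j hj using fun i => term_eq_var L (ts i)
      have hts : ts = fun i => Term.var (j i) := funext hj
      subst hts
      have key : {x : ModSpace L |
          BoundedFormula.Realize (M := ModCarrier x) (R.boundedFormula fun i => Term.var (j i)) b xs}
          = (fun x : ModSpace L => x l' R fun i => Sum.elim b xs (j i)) ⁻¹' {true} := rfl
      rw [key]
      exact (isClopen_discrete _).preimage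
        ((continuous_apply _).comp ((continuous_apply R).comp (continuous_apply l')))
  | imp h1 h2 ih1 ih2 =>
    rename_i φ₁ φ₂
    have : {x : ModSpace L | BoundedFormula.Realize (M := ModCarrier x) (φ₁.imp φ₂) b xs}
        = {x : ModSpace L | BoundedFormula.Realize (M := ModCarrier x) φ₁ b xs}ᶜ
          ∪ {x : ModSpace L | BoundedFormula.Realize (M := ModCarrier x) φ₂ b xs} := by
      ext x
      simp [BoundedFormula.realize_imp, imp_iff_not_or]
      exact imp_iff_not_or
    rw [this]
    exact (ih1.compl).union ih2

theorem isClopen_realizeF {n : ℕ} (φ : L.Formula (Fin n)) (hφ : φ.IsQF) (b : Fin n → ℕ) :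
    IsClopen {x : ModSpace L | Formula.Realize (M := ModCarrier x) φ b} := by
  have key : {x : ModSpace L | Formula.Realize (M := ModCarrier x) φ b}
      = {x : ModSpace L |
          BoundedFormula.Realize (M := ModCarrier x) φ b (fun i => (i : Fin 0).elim0)} := by
    ext x
    show BoundedFormula.Realize (M := ModCarrier x) φ b default ↔ _
    exact iff_of_eq (congrArg _ (funext fun i => (i : Fin 0).elim0))
  rw [key]
  exact isClopen_realize L φ hφ b (fun i => i.elim0)
end Clopen
section Sets
variable (L : FirstOrder.Language.{0,0}) [L.IsRelational] [∀ n, Countable (L.Relations n)]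
variable (M : Type) [L.Structure M]

/-- `{x | (M, a) ≤_α (N_x, b)}`. -/
def Sset (α : Ordinal.{0}) {n : ℕ} (a : Fin n → M) (b : Fin n → ℕ) : Set (ModSpace L) :=
  {x | bfLeq L α M (ModCarrier x) a b}

/-- `{x | (N_x, b) ≤_α (M, a)}`. -/
def Tset (α : Ordinal.{0}) {n : ℕ} (a : Fin n → M) (b : Fin n → ℕ) : Set (ModSpace L) :=
  {x | bfLeq L α (ModCarrier x) M b a}

theorem qfEnum_isQF (n k : ℕ) : (qfEnum L n k).IsQF :=
  haveI : Nonempty {φ : L.Formula (Fin n) // φ.IsQF} :=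
    ⟨⟨⊥, BoundedFormula.isQF_bot⟩⟩
  (Classical.choose (exists_surjective_nat {φ : L.Formula (Fin n) // φ.IsQF}) k).2

theorem isClopen_iff_aux (A : ModSpace L → Prop) (p : Prop)
    (hA : IsClopen {x | A x}) : IsClopen {x : ModSpace L | A x ↔ p} := by
  rcases Classical.em p with h | h
  · have : {x : ModSpace L | A x ↔ p} = {x | A x} := by ext x; simp [h]
    rw [this]; exact hA
  · have : {x : ModSpace L | A x ↔ p} = {x | A x}ᶜ := by ext x; simp [h]
    rw [this]; exact hA.compl

theorem isClopen_Sset0 {n : ℕ} (a : Fin n → M) (b : Fin n → ℕ) :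
    IsClopen (Sset L M 0 a b) := by
  have key : Sset L M 0 a b = ⋂ k : Fin n,
      {x : ModSpace L | Formula.Realize (M := ModCarrier x) (qfEnum L n k) b
        ↔ (qfEnum L n k).Realize a} := by
    ext x
    simp only [Sset, Set.mem_setOf_eq, Set.mem_iInter]
    refine (iff_of_eq (bfLeq.eq_1 _ _ _ _ _ _)).trans ?_; rw [if_pos rfl]
    constructor
    · intro h k
      exact (h k k.2).symm
    · intro h k hk
      exact (h ⟨k, hk⟩).symm
  rw [key]
  exact isClopen_iInter_of_finite fun k =>
    isClopen_iff_aux L _ _ (isClopen_realizeF L _ (qfEnum_isQF L n k) b)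

theorem isClopen_Tset0 {n : ℕ} (a : Fin n → M) (b : Fin n → ℕ) :
    IsClopen (Tset L M 0 a b) := by
  have key : Tset L M 0 a b = ⋂ k : Fin n,
      {x : ModSpace L | Formula.Realize (M := ModCarrier x) (qfEnum L n k) b
        ↔ (qfEnum L n k).Realize a} := by
    ext x
    simp only [Tset, Set.mem_setOf_eq, Set.mem_iInter]
    refine (iff_of_eq (bfLeq.eq_1 _ _ _ _ _ _)).trans ?_; rw [if_pos rfl]
    constructor
    · intro h k
      exact h k k.2
    · intro h k hk
      exact h ⟨k, hk⟩
  rw [key]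
  exact isClopen_iInter_of_finite fun k =>
    isClopen_iff_aux L _ _ (isClopen_realizeF L _ (qfEnum_isQF L n k) b)

theorem Sset_eq (α : Ordinal.{0}) (hα : α ≠ 0) {n : ℕ} (a : Fin n → M) (b : Fin n → ℕ) :
    Sset L M α a b = ⋂ p : {β : Ordinal.{0} // β < α} × (Σ m : ℕ, Fin m → ℕ),
      ⋃ c : Fin p.2.1 → M, Tset L M p.1.1 (Fin.append a c) (Fin.append b p.2.2) := by
  ext x
  simp only [Sset, Tset, Set.mem_setOf_eq, Set.mem_iInter, Set.mem_iUnion]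
  refine (iff_of_eq (bfLeq.eq_1 _ _ _ _ _ _)).trans ?_; rw [if_neg hα]
  constructor
  · rintro h ⟨⟨β, hβ⟩, ⟨m, d⟩⟩
    exact h β hβ m d
  · intro h β hβ m d
    exact h ⟨⟨β, hβ⟩, ⟨m, d⟩⟩

theorem Tset_eq (α : Ordinal.{0}) (hα : α ≠ 0) {n : ℕ} (a : Fin n → M) (b : Fin n → ℕ) :
    Tset L M α a b = ⋂ p : {β : Ordinal.{0} // β < α} × (Σ m : ℕ, Fin m → M),
      ⋃ c : Fin p.2.1 → ℕ, Sset L M p.1.1 (Fin.append a p.2.2) (Fin.append b c) := by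
  ext x
  simp only [Sset, Tset, Set.mem_setOf_eq, Set.mem_iInter, Set.mem_iUnion]
  refine (iff_of_eq (bfLeq.eq_1 _ _ _ _ _ _)).trans ?_; rw [if_neg hα]
  constructor
  · rintro h ⟨⟨β, hβ⟩, ⟨m, d⟩⟩
    exact h β hβ m d
  · intro h β hβ m d
    exact h ⟨⟨β, hβ⟩, ⟨m, d⟩⟩

theorem countable_Iio (α : Ordinal.{0}) (h : α.card ≤ Cardinal.aleph0) :
    Countable {β : Ordinal.{0} // β < α} := by
  have h1 : Cardinal.mk (Set.Iio α) ≤ Cardinal.aleph0 := by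
    rw [Ordinal.mk_Iio_ordinal]
    simpa using Cardinal.lift_le.2 h
  exact Cardinal.mk_le_aleph0_iff.1 h1

end Sets
section Ord
theorem add_one_lt_of_lt_limit {μ y : Ordinal.{0}} (h : Order.IsSuccLimit μ) (hy : y < μ) : y + 1 < μ := by
  rw [Ordinal.add_one_eq_succ]; exact h.succ_lt hy

theorem three_mul_lt_limit : ∀ β μ : Ordinal.{0}, Order.IsSuccLimit μ → β < μ → 3*β < μ := by
  intro β
  induction β using Ordinal.induction with
  | h β IH =>
    intro μ hμ hβ
    rcases Ordinal.zero_or_succ_or_isSuccLimit β with h0 | ⟨γ, rfl⟩ | hlim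
    · subst h0; simpa using hμ.pos
    · have hγlt : γ < Order.succ γ := Order.lt_succ γ
      have hγ : γ < μ := lt_trans hγlt hβ
      have h3 : 3 * Order.succ γ = 3*γ + 3 := by rw [Ordinal.mul_succ]
      rw [h3]
      have e : 3*γ + 3 = ((3*γ+1)+1)+1 := by rw [add_assoc, add_assoc]; norm_num
      rw [e]
      exact add_one_lt_of_lt_limit hμ (add_one_lt_of_lt_limit hμ
        (add_one_lt_of_lt_limit hμ (IH γ hγlt μ hμ hγ)))
    · have h3 : 3 * β ≤ β := by
        rw [Ordinal.mul_le_iff_of_isSuccLimit hlim]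
        intro γ hγ
        exact (IH γ hγ β hlim hγ).le
      exact lt_of_le_of_lt h3 hβ

theorem add3_add1_lt_limit {μ x : Ordinal.{0}} (h : Order.IsSuccLimit μ) (hx : x < μ) : (x+3)+1 < μ := by
  have key : ∀ k : ℕ, x + (k:Ordinal) < μ := by
    intro k; induction k with
    | zero => simpa using hx
    | succ k ih =>
      have := add_one_lt_of_lt_limit h ih
      push_cast
      rwa [add_assoc] at this
  have k4 := key 4
  have h34 : (3:Ordinal)+1 = 4 := by norm_num
  rw [add_assoc, h34]
  simpa using k4

theorem rank_lt_rank {β α : Ordinal.{0}} (h : β < α) : (3*β+3)+1 < 3*α+3 := by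
  have hsucc : β+1 ≤ α := by rw [Ordinal.add_one_eq_succ]; exact Order.succ_le_of_lt h
  calc (3*β+3)+1 < (3*β+3)+3 := add_lt_add_right (by norm_num : (1:Ordinal) < 3) _
    _ = 3*(β+1)+3 := by rw [mul_add, mul_one]
    _ ≤ 3*α+3 := add_le_add_left (mul_le_mul_right hsucc 3) 3

theorem one_le_rank {β : Ordinal.{0}} : 1 ≤ 3*β+3 :=
  le_trans (by norm_num : (1:Ordinal) ≤ 3) le_add_self

theorem one_lt_rank {β : Ordinal.{0}} : 1 < 3*β+3 :=
  lt_of_lt_of_le (by norm_num : (1:Ordinal) < 3) le_add_self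

theorem lt_self_add_one (x : Ordinal.{0}) : x < x + 1 := by
  rw [Ordinal.add_one_eq_succ]; exact Order.lt_succ x

theorem card_add_one_le {lam : Ordinal.{0}} (hc : lam.card ≤ Cardinal.aleph0) :
    (lam+1).card ≤ Cardinal.aleph0 := by
  rw [Ordinal.card_add, Ordinal.card_one]
  exact Cardinal.add_le_aleph0.2 ⟨hc, Cardinal.one_le_aleph0⟩
end Ord

section Main
variable (L : FirstOrder.Language.{0,0}) [L.IsRelational] [∀ n, Countable (L.Relations n)]
variable (M : Type) [L.Structure M] [Countable M]

theorem step (α : Ordinal.{0}) (hα : α ≠ 0) (hcard : α.card ≤ Cardinal.aleph0)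
    (γ : Ordinal.{0}) (hγ : 1 < γ)
    (H : ∀ β, β < α → ∃ δ, 1 ≤ δ ∧ δ + 1 < γ ∧
      ∀ {n : ℕ} (a : Fin n → M) (b : Fin n → ℕ),
        PiB δ (Sset L M β a b) ∧ PiB δ (Tset L M β a b))
    {n : ℕ} (a : Fin n → M) (b : Fin n → ℕ) :
    PiB γ (Sset L M α a b) ∧ PiB γ (Tset L M α a b) := by
  haveI := countable_Iio α hcard
  constructor
  · rw [Sset_eq L M α hα a b]
    refine piB_iInter (fun p : {β : Ordinal.{0} // β < α} × (Σ m : ℕ, Fin m → ℕ) =>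
      ⋃ c : Fin p.2.1 → M, Tset L M p.1.1 (Fin.append a c) (Fin.append b p.2.2)) hγ ?_
    rintro ⟨⟨β, hβ⟩, ⟨m, d⟩⟩
    obtain ⟨δ, h1, h2, hP⟩ := H β hβ
    refine ⟨δ+1, le_trans h1 (lt_self_add_one δ).le, h2, ?_⟩
    refine sigmaB_iUnion _ (lt_of_le_of_lt h1 (lt_self_add_one δ)) ?_
    intro c
    exact ⟨δ, h1, lt_self_add_one δ, (hP (Fin.append a c) (Fin.append b d)).2⟩
  · rw [Tset_eq L M α hα a b]
    refine piB_iInter (fun p : {β : Ordinal.{0} // β < α} × (Σ m : ℕ, Fin m → M) =>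
      ⋃ c : Fin p.2.1 → ℕ, Sset L M p.1.1 (Fin.append a p.2.2) (Fin.append b c)) hγ ?_
    rintro ⟨⟨β, hβ⟩, ⟨m, d⟩⟩
    obtain ⟨δ, h1, h2, hP⟩ := H β hβ
    refine ⟨δ+1, le_trans h1 (lt_self_add_one δ).le, h2, ?_⟩
    refine sigmaB_iUnion _ (lt_of_le_of_lt h1 (lt_self_add_one δ)) ?_
    intro c
    exact ⟨δ, h1, lt_self_add_one δ, (hP (Fin.append a d) (Fin.append b c)).1⟩

theorem bf_piB : ∀ α : Ordinal.{0}, α.card ≤ Cardinal.aleph0 →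
    ∀ {n : ℕ} (a : Fin n → M) (b : Fin n → ℕ),
      PiB (3*α+3) (Sset L M α a b) ∧ PiB (3*α+3) (Tset L M α a b) := by
  intro α
  induction α using Ordinal.induction with
  | h α IH =>
    intro hcard n a b
    rcases eq_or_ne α 0 with rfl | hα
    · exact ⟨piB_of_isClopen (isClopen_Sset0 L M a b),
        piB_of_isClopen (isClopen_Tset0 L M a b)⟩
    · refine step L M α hα hcard _ one_lt_rank (fun β hβ => ?_) a b
      exact ⟨3*β+3, one_le_rank, rank_lt_rank hβ,
        fun a b => IH β hβ (le_trans (Ordinal.card_le_card hβ.le) hcard) a b⟩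

theorem bf_piB_limit (lam : Ordinal.{0}) (hlam : Order.IsSuccLimit lam)
    (hc : lam.card ≤ Cardinal.aleph0) {n : ℕ} (a : Fin n → M) (b : Fin n → ℕ) :
    PiB lam (Sset L M lam a b) ∧ PiB lam (Tset L M lam a b) := by
  refine step L M lam hlam.pos.ne' hc lam (Ordinal.one_lt_of_isSuccLimit hlam) (fun β hβ => ?_) a b
  exact ⟨3*β+3, one_le_rank, add3_add1_lt_limit hlam (three_mul_lt_limit β lam hlam hβ),
    fun a b => bf_piB L M β (le_trans (Ordinal.card_le_card hβ.le) hc) a b⟩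

theorem bf_piB_succ (lam : Ordinal.{0}) (hlam : Order.IsSuccLimit lam)
    (hc : lam.card ≤ Cardinal.aleph0) {n : ℕ} (a : Fin n → M) (b : Fin n → ℕ) :
    PiB (lam+1+1) (Sset L M (lam+1) a b) ∧ PiB (lam+1+1) (Tset L M (lam+1) a b) := by
  have hne : lam + 1 ≠ 0 := by
    rw [Ordinal.add_one_eq_succ]; exact (Order.succ_ne_bot lam)
  have h11 : (1:Ordinal) < lam+1+1 :=
    lt_trans (lt_of_le_of_lt (Ordinal.one_lt_of_isSuccLimit hlam).le (lt_self_add_one lam)) (lt_self_add_one (lam+1))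
  refine step L M (lam+1) hne (card_add_one_le hc) _ h11 (fun β hβ => ?_) a b
  have hβle : β ≤ lam := by
    rw [Ordinal.add_one_eq_succ, Order.lt_succ_iff] at hβ; exact hβ
  rcases lt_or_eq_of_le hβle with hlt | rfl
  · refine ⟨3*β+3, one_le_rank, ?_, fun a b => bf_piB L M β
      (le_trans (Ordinal.card_le_card hlt.le) hc) a b⟩
    exact lt_trans (lt_trans (add3_add1_lt_limit hlam (three_mul_lt_limit β lam hlam hlt))
      (lt_self_add_one lam)) (lt_self_add_one (lam+1))
  · exact ⟨β, (Ordinal.one_lt_of_isSuccLimit hlam).le, lt_self_add_one (β+1),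
      fun a b => bf_piB_limit L M β hlam hc a b⟩
end Main
section Symm
variable (L : FirstOrder.Language.{0,0}) [L.IsRelational] [∀ n, Countable (L.Relations n)]
variable {A B : Type} [L.Structure A] [L.Structure B]

theorem append_fin_zero {C : Type} {n : ℕ} (a : Fin n → C) (c : Fin 0 → C) :
    Fin.append a c = a := by
  have : c = Fin.elim0 := funext fun i => i.elim0
  subst this
  simp [Fin.append_elim0]

theorem bfLeq_limit_symm {μ : Ordinal.{0}} (hμ : Order.IsSuccLimit μ) {n : ℕ} {a : Fin n → A}
    {b : Fin n → B} (h : bfLeq L μ A B a b) : bfLeq L μ B A b a := by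
  rw [bfLeq, if_neg hμ.pos.ne'] at h ⊢
  intro β hβ m d
  obtain ⟨c₀, hc₀⟩ := h (β+1) (add_one_lt_of_lt_limit hμ hβ) 0 Fin.elim0
  rw [append_fin_zero, append_fin_zero] at hc₀
  have hne : β + 1 ≠ 0 := by
    rw [Ordinal.add_one_eq_succ]; exact Order.succ_ne_bot β
  rw [bfLeq, if_neg hne] at hc₀
  obtain ⟨e, he⟩ := hc₀ β (lt_self_add_one β) m d
  exact ⟨e, he⟩
end Symm



/-- For any countable structure `M` and countable limit ordinal `λ`:
(1) `{N : N ≤_λ M} = {N : N ≥_λ M}` and this set is `𝚷⁰_λ`; (2) for `α = λ+1`,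
`{N : N ≥_α M}` is `𝚷⁰_{α+1}`; (3) for `α = λ+1`, `{N : N ≤_α M}` is `𝚷⁰_{α+1}`. -/
theorem statement4 (L : FirstOrder.Language.{0,0}) [L.IsRelational]
    [∀ n, Countable (L.Relations n)]
    (M : Type) [L.Structure M] [Countable M]
    (lam : Ordinal.{0}) (hlam : Order.IsSuccLimit lam) (hc : lam.card ≤ Cardinal.aleph0) :
    ({x : ModSpace L | structLeq L lam (ModCarrier x) M}
        = {x : ModSpace L | structLeq L lam M (ModCarrier x)} ∧
      PiB lam {x : ModSpace L | structLeq L lam (ModCarrier x) M}) ∧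
    PiB (lam + 1 + 1) {x : ModSpace L | structLeq L (lam + 1) M (ModCarrier x)} ∧
    PiB (lam + 1 + 1) {x : ModSpace L | structLeq L (lam + 1) (ModCarrier x) M} := by
  have hTlam : {x : ModSpace L | structLeq L lam (ModCarrier x) M}
      = Tset L M lam Fin.elim0 Fin.elim0 := rfl
  have hSsucc : {x : ModSpace L | structLeq L (lam+1) M (ModCarrier x)}
      = Sset L M (lam+1) Fin.elim0 Fin.elim0 := rfl
  have hTsucc : {x : ModSpace L | structLeq L (lam+1) (ModCarrier x) M}
      = Tset L M (lam+1) Fin.elim0 Fin.elim0 := rfl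
  refine ⟨⟨?_, ?_⟩, ?_, ?_⟩
  · ext x
    simp only [Set.mem_setOf_eq]
    exact ⟨fun h => bfLeq_limit_symm L hlam h, fun h => bfLeq_limit_symm L hlam h⟩
  · rw [hTlam]
    exact (bf_piB_limit L M lam hlam hc Fin.elim0 Fin.elim0).2
  · rw [hSsucc]
    exact (bf_piB_succ L M lam hlam hc Fin.elim0 Fin.elim0).1
  · rw [hTsucc]
    exact (bf_piB_succ L M lam hlam hc Fin.elim0 Fin.elim0).2


end BFPaper
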